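/- Let 1 < a < b < ∞ and define ψ(n) = a^n if n is even and ψ(n) = b^n if n is odd. Then limsup_{n→∞} ψ(n+1) / (ψ(1) + ψ(2) + ... + ψ(n)) = b² − 1. -/

import Mathlib

open Filter

/-- For 1 < a < b and ψ(n) = aⁿ (n even), bⁿ (n odd),
limsup ψ(n+1)/(ψ(1)+⋯+ψ(n)) = b² − 1. -/
theorem limsup_alternating_ratio (a b : ℝ) (ha : 1 < a) (hab : a < b)
    (ψ : ℕ → ℝ) (hψ : ∀ n, ψ n = if Even n then a ^ n else b ^ n) :
    limsup (fun n : ℕ => ψ (n + 1) / ∑ k ∈ Finset.Icc 1 n, ψ k) atTop = b ^ 2 - 1 := by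
  have hb : 1 < b := ha.trans hab
  have ha0 : (0:ℝ) < a := by linarith
  have hb0 : (0:ℝ) < b := by linarith
  have hane : a ≠ 0 := ne_of_gt ha0
  have hbne : b ≠ 0 := ne_of_gt hb0
  have ha2 : (1:ℝ) < a^2 := by nlinarith
  have hb2 : (1:ℝ) < b^2 := by nlinarith
  have ha2ne : a^2 - 1 ≠ 0 := by nlinarith
  have hb2ne : b^2 - 1 ≠ 0 := by nlinarith
  set S : ℕ → ℝ := fun n => ∑ k ∈ Finset.Icc 1 n, ψ k with hS
  set f : ℕ → ℝ := fun n => ψ (n + 1) / S n with hf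
  have hψpos : ∀ k, 0 < ψ k := by
    intro k; rw [hψ]; split <;> positivity
  have hSnonneg : ∀ n, 0 ≤ S n := fun n => Finset.sum_nonneg fun k _ => (hψpos k).le
  have hfnonneg : ∀ n, 0 ≤ f n := fun n => div_nonneg (hψpos _).le (hSnonneg n)
  have hψodd : ∀ m : ℕ, ψ (2*m+1) = b^(2*m+1) := by
    intro m; rw [hψ]; simp [Nat.even_add_one, parity_simps]
  have hψeven : ∀ m : ℕ, ψ (2*m+2) = a^(2*m+2) := by
    intro m; rw [hψ]
    have : Even (2*m+2) := ⟨m+1, by ring⟩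
    simp [this]
  -- exact formula for S at even indices
  have hSformula : ∀ m : ℕ, S (2*m) =
      (b^(2*m+1) - b)/(b^2-1) + (a^(2*m+2) - a^2)/(a^2-1) := by
    intro m
    induction m with
    | zero =>
      simp only [hS, Nat.mul_zero]
      norm_num [Finset.Icc_self]
      try field_simp
      try ring
    | succ m ih =>
      have h1 : 2*(m+1) = (2*m+1)+1 := by ring
      simp only [hS] at ih ⊢
      rw [h1, Finset.sum_Icc_succ_top (by omega), Finset.sum_Icc_succ_top (by omega), ih]
      have e1 : (2*m+1)+1 = 2*m+2 := by ring
      rw [e1, hψeven m]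
      have e2 : ψ (2*m+1) = b^(2*m+1) := hψodd m
      rw [e2]
      have p1 : b^(2*m+2+1) = b^(2*m+1) * b^2 := by
        rw [show 2*m+2+1 = (2*m+1)+2 from by ring, pow_add]
      have p2 : a^(2*m+2+2) = a^(2*m+2) * a^2 := by
        rw [pow_add]
      rw [p1, p2]
      field_simp
      ring
  -- limit along even indices
  have t1 : Filter.Tendsto (fun m : ℕ => ((1:ℝ)/b^2)^m) atTop (nhds 0) := by
    apply tendsto_pow_atTop_nhds_zero_of_abs_lt_one
    rw [abs_of_pos (by positivity)]
    rw [div_lt_one (by positivity)]; linarith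
  have t2 : Filter.Tendsto (fun m : ℕ => (a^2/b^2)^m) atTop (nhds 0) := by
    apply tendsto_pow_atTop_nhds_zero_of_abs_lt_one
    rw [abs_of_pos (by positivity)]
    rw [div_lt_one (by positivity)]; nlinarith
  have key : ∀ m : ℕ, S (2*m) / b^(2*m+1) =
      (1 - ((1:ℝ)/b^2)^m)/(b^2-1)
        + (a^2/b * (a^2/b^2)^m - a^2/b * ((1:ℝ)/b^2)^m)/(a^2-1) := by
    intro m
    rw [hSformula m]
    have pb : b^(2*m+1) = b * (b^2)^m := by rw [← pow_mul]; ring_nf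
    have pa : a^(2*m+2) = a^2 * (a^2)^m := by rw [← pow_mul]; ring_nf
    rw [pb, pa, div_pow, div_pow, one_pow]
    have hbm : ((b:ℝ)^2)^m ≠ 0 := by positivity
    field_simp
  have tD : Filter.Tendsto (fun m : ℕ => S (2*m) / b^(2*m+1)) atTop
      (nhds (1/(b^2-1))) := by
    simp only [key]
    have h1 : Filter.Tendsto (fun m : ℕ => (1 - ((1:ℝ)/b^2)^m)/(b^2-1)) atTop
        (nhds ((1 - 0)/(b^2-1))) :=
      (((tendsto_const_nhds : Filter.Tendsto (fun _ : ℕ => (1:ℝ)) atTop (nhds 1)).sub t1)).div_const (b^2-1)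
    have h2 : Filter.Tendsto
        (fun m : ℕ => (a^2/b * (a^2/b^2)^m - a^2/b * ((1:ℝ)/b^2)^m)/(a^2-1)) atTop
        (nhds ((a^2/b * 0 - a^2/b * 0)/(a^2-1))) :=
      ((((tendsto_const_nhds : Filter.Tendsto (fun _ : ℕ => a^2/b) atTop (nhds (a^2/b))).mul t2)).sub
        (((tendsto_const_nhds : Filter.Tendsto (fun _ : ℕ => a^2/b) atTop (nhds (a^2/b))).mul t1))).div_const (a^2-1)
    have h3 := h1.add h2
    convert h3 using 2
    simp
  have teven : Filter.Tendsto (fun m : ℕ => f (2*m)) atTop (nhds (b^2-1)) := by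
    have hne : (1:ℝ)/(b^2-1) ≠ 0 := by
      simp [hb2ne]
    have h := tD.inv₀ hne
    have hval : ((1:ℝ)/(b^2-1))⁻¹ = b^2 - 1 := by
      rw [one_div, inv_inv]
    rw [hval] at h
    refine h.congr fun m => ?_
    rw [inv_div, hf]
    simp only
    rw [hψodd m]
  -- limit along odd indices
  have todd : Filter.Tendsto (fun m : ℕ => f (2*m+1)) atTop (nhds 0) := by
    have hub : ∀ m : ℕ, f (2*m+1) ≤ (a^2/b) * (a^2/b^2)^m := by
      intro m
      have hmem : (2*m+1) ∈ Finset.Icc 1 (2*m+1) :=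
        Finset.mem_Icc.2 ⟨by omega, le_refl _⟩
      have hle : b^(2*m+1) ≤ S (2*m+1) := by
        rw [← hψodd m]
        exact Finset.single_le_sum (fun k _ => (hψpos k).le) hmem
      have hSpos : 0 < S (2*m+1) := lt_of_lt_of_le (by positivity) hle
      have hfval : f (2*m+1) = a^(2*m+2) / S (2*m+1) := by
        rw [hf]
        simp only
        have e : 2*m+1+1 = 2*m+2 := by ring
        rw [e, hψeven m]
      rw [hfval]
      have h2 : a^(2*m+2) / S (2*m+1) ≤ a^(2*m+2) / b^(2*m+1) :=
        div_le_div_of_nonneg_left (by positivity) (by positivity) hle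
      refine h2.trans_eq ?_
      rw [div_pow]
      have pb : b^(2*m+1) = b * (b^2)^m := by rw [← pow_mul]; ring_nf
      have pa : a^(2*m+2) = a^2 * (a^2)^m := by rw [← pow_mul]; ring_nf
      rw [pb, pa]
      field_simp
      try ring
    have tub : Filter.Tendsto (fun m : ℕ => (a^2/b) * (a^2/b^2)^m) atTop (nhds 0) := by
      have := t2.const_mul (a^2/b)
      simpa using this
    exact squeeze_zero (fun m => hfnonneg _) hub tub
  -- combining parities
  have combine : ∀ (P : ℕ → Prop), (∀ᶠ m in atTop, P (2*m)) → (∀ᶠ m in atTop, P (2*m+1)) →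
      ∀ᶠ n in atTop, P n := by
    intro P h1 h2
    obtain ⟨M1, hM1⟩ := eventually_atTop.1 h1
    obtain ⟨M2, hM2⟩ := eventually_atTop.1 h2
    refine eventually_atTop.2 ⟨2*M1+2*M2+2, fun n hn => ?_⟩
    rcases Nat.even_or_odd n with ⟨m, hm⟩ | ⟨m, hm⟩
    · have h : n = 2*m := by omega
      rw [h]; exact hM1 m (by omega)
    · rw [hm]; exact hM2 m (by omega)
  have hmap : Filter.Tendsto (fun m : ℕ => 2*m) atTop atTop := by
    apply tendsto_atTop_atTop.2
    intro c; exact ⟨c, fun m hm => by omega⟩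
  have hL0 : (0:ℝ) < b^2 - 1 := by linarith
  -- eventual upper bounds
  have hεle : ∀ ε : ℝ, 0 < ε → ∀ᶠ n in atTop, f n ≤ b^2 - 1 + ε := by
    intro ε hε
    refine combine _ ?_ ?_
    · exact (teven.eventually_lt_const (by linarith)).mono fun m h => h.le
    · exact (todd.eventually_lt_const (by linarith)).mono fun m h => h.le
  have hbdd : IsBoundedUnder (· ≤ ·) atTop f :=
    isBoundedUnder_of_eventually_le (hεle 1 one_pos)
  have hcobdd : IsCoboundedUnder (· ≤ ·) atTop f :=
    isCoboundedUnder_le_of_le atTop hfnonneg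
  refine le_antisymm ?_ ?_
  · refine le_of_forall_pos_le_add fun ε hε => ?_
    exact limsup_le_of_le hcobdd (hεle ε hε)
  · refine le_of_forall_pos_le_add fun ε hε => ?_
    have hfreq : ∃ᶠ n in atTop, b^2 - 1 - ε ≤ f n := by
      have hev : ∀ᶠ m in atTop, b^2 - 1 - ε ≤ f (2*m) :=
        (teven.eventually_const_lt (by linarith)).mono fun m h => h.le
      exact hmap.frequently hev.frequently
    have := le_limsup_of_frequently_le hfreq hbdd
    linarith [this]
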